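/- Let Y_1, Y_2, ... be i.i.d. with MGF M_Y satisfying M_Y(t)M_Y(-t) ≥ 1 wherever defined (true for EDMs by convexity of Ψ), and N_m ~ ZTP(1/m) independent of the Y's. Define the alternating compound (Y_{++}^L)_m = Σ_{n=1}^{N_m} (-1)^{n+1} Y_n. Then its MGF converges pointwise to M_Y(t) as m → ∞. -/

import Mathlib

open Filter

private lemma exp_tsum' (y : ℝ) : Real.exp y = ∑' n : ℕ, y ^ n / (n.factorial : ℝ) := by
  rw [Real.exp_eq_exp_ℝ, NormedSpace.exp_eq_tsum_div]

/-- **Convergence of the alternating compound MGF (linear linkage).**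
Let `M` be the MGF of the i.i.d. summands, with `M t > 0`, `M (-t) > 0` and
`M t * M (-t) ≥ 1` (true for additive EDMs by convexity of `Ψ`), and let
`N_m ~ ZTP(1/m)` be independent of the `Y`'s.  The MGF of the alternating compound
`(Y₊₊ᴸ)_m = ∑_{n=1}^{N_m} (-1)^{n+1} Y n`, namely
`(e^{1/m} - 1)⁻¹ ∑_{n ≥ 1} ((1/m)^n / n!) M(t)^{⌈n/2⌉} M(-t)^{⌊n/2⌋}`,
converges pointwise to `M t` as `m → ∞`. -/
theorem ztp_alternating_compound_mgf_tendsto (M : ℝ → ℝ) (t : ℝ)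
    (hMp : 0 < M t) (hMm : 0 < M (-t)) (hM1 : 1 ≤ M t * M (-t)) :
    Tendsto (fun m : ℕ =>
        (Real.exp (1 / (m : ℝ)) - 1)⁻¹ *
          ∑' n : ℕ, ((1 / (m : ℝ)) ^ (n + 1) / (n + 1).factorial)
            * M t ^ ((n + 1 + 1) / 2) * M (-t) ^ ((n + 1) / 2))
      atTop (nhds (M t)) := by
  set P : ℝ := M t * M (-t) with hPdef
  have hP0 : 0 < P := mul_pos hMp hMm
  -- pointwise bound on the powers
  have key : ∀ n : ℕ, M t ^ ((n + 1 + 1) / 2) * M (-t) ^ ((n + 1) / 2) ≤ (1 + M t) * P ^ n := by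
    intro n
    rcases Nat.even_or_odd n with ⟨c, hc⟩ | ⟨c, hc⟩
    · have h1 : (n + 1 + 1) / 2 = c + 1 := by omega
      have h2 : (n + 1) / 2 = c := by omega
      rw [h1, h2]
      have he : M t ^ (c + 1) * M (-t) ^ c = M t * P ^ c := by
        rw [hPdef, mul_pow]; ring
      rw [he]
      have hc' : P ^ c ≤ P ^ n := pow_le_pow_right₀ hM1 (by omega)
      have hpc : (0:ℝ) < P ^ c := pow_pos hP0 c
      nlinarith [hMp]
    · have h1 : (n + 1 + 1) / 2 = c + 1 := by omega
      have h2 : (n + 1) / 2 = c + 1 := by omega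
      rw [h1, h2]
      have he : M t ^ (c + 1) * M (-t) ^ (c + 1) = P ^ (c + 1) := by
        rw [hPdef, mul_pow]
      rw [he]
      have hc' : P ^ (c + 1) ≤ P ^ n := pow_le_pow_right₀ hM1 (by omega)
      have hpc : (0:ℝ) < P ^ (c + 1) := pow_pos hP0 _
      nlinarith [hMp]
  have hanonneg : ∀ n : ℕ, 0 ≤ M t ^ ((n + 1 + 1) / 2) * M (-t) ^ ((n + 1) / 2) := by
    intro n; positivity
  -- terms
  set T : ℝ → ℕ → ℝ := fun x n =>
    x ^ (n + 1) / ((n + 1).factorial : ℝ) * M t ^ ((n + 1 + 1) / 2) * M (-t) ^ ((n + 1) / 2)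
    with hTdef
  have hTnonneg : ∀ x : ℝ, 0 ≤ x → ∀ n, 0 ≤ T x n := by
    intro x hx n; rw [hTdef]; positivity
  have hTbound : ∀ x : ℝ, 0 ≤ x → ∀ n,
      T x n ≤ (1 + M t) * x * ((x * P) ^ n / (n.factorial : ℝ)) := by
    intro x hx n
    have h1 : T x n ≤ x ^ (n + 1) / ((n + 1).factorial : ℝ) * ((1 + M t) * P ^ n) := by
      rw [hTdef]
      have := key n
      have hnn : (0:ℝ) ≤ x ^ (n + 1) / ((n + 1).factorial : ℝ) := by positivity
      calc x ^ (n + 1) / ((n + 1).factorial : ℝ) * M t ^ ((n + 1 + 1) / 2) * M (-t) ^ ((n + 1) / 2)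
          = x ^ (n + 1) / ((n + 1).factorial : ℝ)
            * (M t ^ ((n + 1 + 1) / 2) * M (-t) ^ ((n + 1) / 2)) := by ring
        _ ≤ _ := mul_le_mul_of_nonneg_left (key n) hnn
    refine h1.trans ?_
    have hfac : ((n.factorial : ℝ)) ≤ ((n + 1).factorial : ℝ) := by
      exact_mod_cast Nat.factorial_le (Nat.le_succ n)
    have hfac0 : (0:ℝ) < (n.factorial : ℝ) := by positivity
    have hnum : x ^ (n + 1) * ((1 + M t) * P ^ n) = (1 + M t) * x * ((x * P) ^ n) := by
      rw [mul_pow]; ring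
    have h2 : x ^ (n + 1) * ((1 + M t) * P ^ n) / ((n + 1).factorial : ℝ)
        ≤ x ^ (n + 1) * ((1 + M t) * P ^ n) / (n.factorial : ℝ) := by
      apply div_le_div_of_nonneg_left _ hfac0 hfac
      positivity
    calc x ^ (n + 1) / ((n + 1).factorial : ℝ) * ((1 + M t) * P ^ n)
        = x ^ (n + 1) * ((1 + M t) * P ^ n) / ((n + 1).factorial : ℝ) := by ring
      _ ≤ x ^ (n + 1) * ((1 + M t) * P ^ n) / (n.factorial : ℝ) := h2
      _ = (1 + M t) * x * ((x * P) ^ n / (n.factorial : ℝ)) := by rw [mul_pow]; ring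
  have hTsum : ∀ x : ℝ, 0 ≤ x → Summable (T x) := by
    intro x hx
    refine Summable.of_nonneg_of_le (hTnonneg x hx) (hTbound x hx) ?_
    exact (Real.summable_pow_div_factorial (x * P)).mul_left _
  -- shifted bound
  have hTshift : ∀ x : ℝ, 0 ≤ x → ∀ n,
      T x (n + 1) ≤ (1 + M t) * x ^ 2 * P * ((x * P) ^ n / (n.factorial : ℝ)) := by
    intro x hx n
    have h1 : T x (n + 1) ≤ x ^ (n + 2) / ((n + 2).factorial : ℝ) * ((1 + M t) * P ^ (n + 1)) := by
      rw [hTdef]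
      have hnn : (0:ℝ) ≤ x ^ (n + 1 + 1) / ((n + 1 + 1).factorial : ℝ) := by positivity
      calc x ^ (n + 1 + 1) / ((n + 1 + 1).factorial : ℝ) * M t ^ ((n + 1 + 1 + 1) / 2) * M (-t) ^ ((n + 1 + 1) / 2)
          = x ^ (n + 1 + 1) / ((n + 1 + 1).factorial : ℝ)
            * (M t ^ ((n + 1 + 1 + 1) / 2) * M (-t) ^ ((n + 1 + 1) / 2)) := by ring
        _ ≤ _ := mul_le_mul_of_nonneg_left (key (n + 1)) hnn
    refine h1.trans ?_
    have hfac : ((n.factorial : ℝ)) ≤ ((n + 2).factorial : ℝ) := by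
      exact_mod_cast Nat.factorial_le (by omega)
    have hfac0 : (0:ℝ) < (n.factorial : ℝ) := by positivity
    have h2 : x ^ (n + 2) * ((1 + M t) * P ^ (n + 1)) / ((n + 2).factorial : ℝ)
        ≤ x ^ (n + 2) * ((1 + M t) * P ^ (n + 1)) / (n.factorial : ℝ) := by
      apply div_le_div_of_nonneg_left _ hfac0 hfac
      positivity
    calc x ^ (n + 2) / ((n + 2).factorial : ℝ) * ((1 + M t) * P ^ (n + 1))
        = x ^ (n + 2) * ((1 + M t) * P ^ (n + 1)) / ((n + 2).factorial : ℝ) := by ring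
      _ ≤ x ^ (n + 2) * ((1 + M t) * P ^ (n + 1)) / (n.factorial : ℝ) := h2
      _ = (1 + M t) * x ^ 2 * P * ((x * P) ^ n / (n.factorial : ℝ)) := by
          rw [mul_pow, pow_succ]; ring
  have hT0 : ∀ x : ℝ, T x 0 = x * M t := by
    intro x; rw [hTdef]; norm_num [Nat.factorial]
  -- lower bound on the sum
  have hlow : ∀ x : ℝ, 0 ≤ x → x * M t ≤ ∑' n, T x n := by
    intro x hx
    have := Summable.le_tsum (hTsum x hx) 0 (fun i _ => hTnonneg x hx i)
    rwa [hT0 x] at this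
  -- upper bound on the sum
  have hup : ∀ x : ℝ, 0 ≤ x →
      (∑' n, T x n) ≤ x * M t + (1 + M t) * x ^ 2 * P * Real.exp (x * P) := by
    intro x hx
    rw [Summable.tsum_eq_zero_add (hTsum x hx), hT0 x]
    have hshiftsum : Summable (fun n => T x (n + 1)) := (summable_nat_add_iff 1).2 (hTsum x hx)
    have hsum2 : Summable (fun n : ℕ => (1 + M t) * x ^ 2 * P * ((x * P) ^ n / (n.factorial : ℝ))) :=
      (Real.summable_pow_div_factorial (x * P)).mul_left _
    have h1 : (∑' n, T x (n + 1))
        ≤ ∑' n : ℕ, (1 + M t) * x ^ 2 * P * ((x * P) ^ n / (n.factorial : ℝ)) :=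
      Summable.tsum_le_tsum (hTshift x hx) hshiftsum hsum2
    have h2 : (∑' n : ℕ, (1 + M t) * x ^ 2 * P * ((x * P) ^ n / (n.factorial : ℝ)))
        = (1 + M t) * x ^ 2 * P * Real.exp (x * P) := by
      rw [tsum_mul_left, exp_tsum' (x * P)]
    linarith [h1, h2.le]
  -- squeeze
  have h0 : Tendsto (fun m : ℕ => 1 / (m : ℝ)) atTop (nhds 0) :=
    tendsto_one_div_atTop_nhds_zero_nat
  have hlowt : Tendsto (fun m : ℕ => M t * Real.exp (-(1 / (m : ℝ)))) atTop (nhds (M t)) := by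
    have hexp : Tendsto (fun m : ℕ => Real.exp (-(1 / (m : ℝ)))) atTop (nhds 1) := by
      have := (Real.continuous_exp.tendsto 0).comp (by simpa using h0.neg)
      simpa [Function.comp_def] using this
    simpa using hexp.const_mul (M t)
  have hupt : Tendsto (fun m : ℕ =>
      M t + (1 + M t) * (1 / (m : ℝ)) * P * Real.exp ((1 / (m : ℝ)) * P)) atTop (nhds (M t)) := by
    have hexp : Tendsto (fun m : ℕ => Real.exp ((1 / (m : ℝ)) * P)) atTop (nhds 1) := by
      have := (Real.continuous_exp.tendsto 0).comp (by simpa using h0.mul_const P)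
      simpa [Function.comp_def] using this
    have h1 : Tendsto (fun m : ℕ =>
        (1 + M t) * (1 / (m : ℝ)) * P * Real.exp ((1 / (m : ℝ)) * P)) atTop (nhds 0) := by
      have := ((h0.const_mul (1 + M t)).mul_const P).mul hexp
      simpa [mul_comm] using this
    simpa using tendsto_const_nhds.add h1
  refine tendsto_of_tendsto_of_tendsto_of_le_of_le' hlowt hupt ?_ ?_
  · filter_upwards [eventually_ge_atTop 1] with m hm
    have hm1 : (1:ℝ) ≤ (m : ℝ) := by exact_mod_cast hm
    set x : ℝ := 1 / (m : ℝ) with hxdef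
    have hx : 0 < x := by positivity
    have hxe : x ≤ Real.exp x - 1 := by linarith [Real.add_one_le_exp x]
    have he : 0 < Real.exp x - 1 := lt_of_lt_of_le hx hxe
    have h1 : M t * Real.exp (-x) * (Real.exp x - 1) ≤ x * M t := by
      have hd : Real.exp (-x) * (Real.exp x - 1) = 1 - Real.exp (-x) := by
        rw [mul_sub, ← Real.exp_add]; ring_nf; simp
      have h2 : 1 - Real.exp (-x) ≤ x := by linarith [Real.add_one_le_exp (-x)]
      calc M t * Real.exp (-x) * (Real.exp x - 1) = M t * (Real.exp (-x) * (Real.exp x - 1)) := by ring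
        _ = M t * (1 - Real.exp (-x)) := by rw [hd]
        _ ≤ M t * x := mul_le_mul_of_nonneg_left h2 hMp.le
        _ = x * M t := mul_comm _ _
    have h3 : M t * Real.exp (-x) ≤ (Real.exp x - 1)⁻¹ * (x * M t) := by
      rw [mul_comm ((Real.exp x - 1)⁻¹) (x * M t), ← div_eq_mul_inv, le_div_iff₀ he]
      exact h1
    exact h3.trans (mul_le_mul_of_nonneg_left (hlow x hx.le) (inv_nonneg.2 he.le))
  · filter_upwards [eventually_ge_atTop 1] with m hm
    have hm1 : (1:ℝ) ≤ (m : ℝ) := by exact_mod_cast hm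
    set x : ℝ := 1 / (m : ℝ) with hxdef
    have hx : 0 < x := by positivity
    have hxe : x ≤ Real.exp x - 1 := by linarith [Real.add_one_le_exp x]
    have he : 0 < Real.exp x - 1 := lt_of_lt_of_le hx hxe
    have hS0 : 0 ≤ ∑' n, T x n := tsum_nonneg (hTnonneg x hx.le)
    have hinv : (Real.exp x - 1)⁻¹ ≤ x⁻¹ := by
      exact inv_anti₀ hx hxe
    calc (Real.exp x - 1)⁻¹ * ∑' n, T x n
        ≤ x⁻¹ * ∑' n, T x n := mul_le_mul_of_nonneg_right hinv hS0
      _ ≤ x⁻¹ * (x * M t + (1 + M t) * x ^ 2 * P * Real.exp (x * P)) :=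
          mul_le_mul_of_nonneg_left (hup x hx.le) (inv_nonneg.2 hx.le)
      _ = M t + (1 + M t) * x * P * Real.exp (x * P) := by
          field_simp
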